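/- Let u be a solution on (0, y₀) of the one-dimensional equation y²(-u'' + λ_m u) + (n-2) y u' - ((n-1)²/4) u = k² u with k > 0, λ_m > 0. If u satisfies liminf_{R→∞} (1/log R) ∫_{1/R}^{y₀} |u(y)|² dy/yⁿ = 0 then u ≡ 0 on (0, y₀). -/

import Mathlib

open MeasureTheory Set Filter

set_option maxHeartbeats 1600000

/-- Let `u` solve `y²(-u'' + λ_m u) + (n-2) y u' - ((n-1)²/4) u = k² u` on `(0, y₀)` with
`k > 0`, `λ_m > 0`.  If `liminf_{R→∞} (1/log R) ∫_{1/R}^{y₀} |u(y)|² dy/yⁿ = 0`, then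
`u ≡ 0` on `(0, y₀)`. -/
theorem fastest_decay_implies_zero
    (n : ℕ) (hn : 2 ≤ n) (k lam y₀ : ℝ) (hk : 0 < k) (hlam : 0 < lam) (hy₀ : 0 < y₀)
    (u u' u'' : ℝ → ℂ)
    (hu : ∀ y ∈ Ioo (0 : ℝ) y₀, HasDerivAt u (u' y) y ∧ HasDerivAt u' (u'' y) y ∧
      (y : ℂ) ^ 2 * (-(u'' y) + (lam : ℂ) * u y) + ((n : ℂ) - 2) * (y : ℂ) * u' y
        - (((n : ℂ) - 1) ^ 2 / 4) * u y = (k : ℂ) ^ 2 * u y)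
    (hlim : Filter.liminf (fun R : ℝ =>
        (Real.log R)⁻¹ * ∫ y in Ioo R⁻¹ y₀, ‖u y‖ ^ 2 / y ^ n) atTop = 0) :
    ∀ y ∈ Ioo (0 : ℝ) y₀, u y = 0 := by
  obtain ⟨m, rfl⟩ : ∃ m, n = m + 2 := ⟨n - 2, by omega⟩
  clear hn
  set a : ℝ := ((m : ℝ) + 1) / 2 with ha
  set v : ℝ → ℂ := fun y => (y : ℂ) * u' y - (a : ℂ) * u y with hv
  set w : ℝ → ℂ := fun y => (1 - (a : ℂ)) * u' y + (y : ℂ) * u'' y with hw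
  set Mf : ℝ → ℝ := fun y => (u y).re * (v y).re + (u y).im * (v y).im with hMf
  set Nf : ℝ → ℝ := fun y => ‖v y‖ ^ 2 + k ^ 2 * ‖u y‖ ^ 2 with hNf
  set Ef : ℝ → ℝ := fun y => Nf y / y ^ (m + 1) with hEf
  set Gf : ℝ → ℝ := fun y => -(Mf y) / y ^ (m + 1) with hGf
  have hnormsq : ∀ z : ℂ, ‖z‖ ^ 2 = z.re ^ 2 + z.im ^ 2 := by
    intro z
    rw [Complex.sq_norm, Complex.normSq_apply]; ring
  -- the complex ODE identity for v
  have hCE : ∀ y ∈ Ioo (0 : ℝ) y₀,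
      (y : ℂ) * w y = (a : ℂ) * v y + ((lam * y ^ 2 - k ^ 2 : ℝ) : ℂ) * u y := by
    intro y hy
    have heq := (hu y hy).2.2
    have hac : ((a : ℝ) : ℂ) = (((m : ℕ) : ℂ) + 1) / 2 := by rw [ha]; push_cast; ring
    simp only [hw, hv]
    push_cast at heq ⊢
    linear_combination (-1 : ℂ) * heq +
      (-2 * (y : ℂ) * u' y + ((a : ℂ) + ((m : ℂ) + 1) / 2) * u y) * hac
  have hcu : ContinuousOn u (Ioo 0 y₀) := fun y hy =>
    ((hu y hy).1.continuousAt).continuousWithinAt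
  have hcu' : ContinuousOn u' (Ioo 0 y₀) := fun y hy =>
    ((hu y hy).2.1.continuousAt).continuousWithinAt
  have hcv : ContinuousOn v (Ioo 0 y₀) :=
    ((Complex.continuous_ofReal.continuousOn).mul hcu').sub (continuousOn_const.mul hcu)
  have hvd : ∀ y ∈ Ioo (0 : ℝ) y₀, HasDerivAt v (w y) y := by
    intro y hy
    have hid : HasDerivAt (fun s : ℝ => (s : ℂ)) 1 y := by simpa using (hasDerivAt_id y).ofReal_comp
    have h := (hid.mul (hu y hy).2.1).sub (((hu y hy).1).const_mul (a : ℂ))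
    refine h.congr_deriv (Eq.symm ?_)
    simp only [hw]; ring
  -- re/im identities at a point
  have hEGd : ∀ y ∈ Ioo (0 : ℝ) y₀,
      HasDerivAt Ef (2 * lam * Mf y / y ^ m) y ∧
      HasDerivAt Gf ((k ^ 2 * ‖u y‖ ^ 2 - ‖v y‖ ^ 2 - lam * y ^ 2 * ‖u y‖ ^ 2) / y ^ (m + 2)) y := by
    intro y hy
    obtain ⟨hy0, hy1⟩ := hy
    have hy' : y ∈ Ioo (0 : ℝ) y₀ := ⟨hy0, hy1⟩
    have h1 := (hu y hy').1
    have hvy := hvd y hy'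
    have hure : HasDerivAt (fun s => (u s).re) (u' y).re y :=
      Complex.reCLM.hasFDerivAt.comp_hasDerivAt y h1
    have huim : HasDerivAt (fun s => (u s).im) (u' y).im y :=
      Complex.imCLM.hasFDerivAt.comp_hasDerivAt y h1
    have hvre : HasDerivAt (fun s => (v s).re) (w y).re y :=
      Complex.reCLM.hasFDerivAt.comp_hasDerivAt y hvy
    have hvim : HasDerivAt (fun s => (v s).im) (w y).im y :=
      Complex.imCLM.hasFDerivAt.comp_hasDerivAt y hvy
    have hce := hCE y hy'
    rw [Complex.ext_iff] at hce
    obtain ⟨hre, him⟩ := hce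
    simp only [Complex.mul_re, Complex.mul_im, Complex.add_re, Complex.add_im,
      Complex.ofReal_re, Complex.ofReal_im, zero_mul, mul_zero, sub_zero, zero_add,
      zero_sub, neg_zero] at hre him
    have hvre' : (v y).re = y * (u' y).re - a * (u y).re := by
      simp only [hv, Complex.sub_re, Complex.mul_re, Complex.ofReal_re, Complex.ofReal_im,
        zero_mul, sub_zero]
    have hvim' : (v y).im = y * (u' y).im - a * (u y).im := by
      simp only [hv, Complex.sub_im, Complex.mul_im, Complex.ofReal_re, Complex.ofReal_im,
        zero_mul, add_zero]
    -- raw derivatives of Nf and Mf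
    have hNd : HasDerivAt Nf
        (((w y).re * (v y).re + (v y).re * (w y).re) + ((w y).im * (v y).im + (v y).im * (w y).im)
          + k ^ 2 * (((u' y).re * (u y).re + (u y).re * (u' y).re)
            + ((u' y).im * (u y).im + (u y).im * (u' y).im))) y := by
      have hNf' : Nf = fun s => ((v s).re * (v s).re + (v s).im * (v s).im)
          + k ^ 2 * ((u s).re * (u s).re + (u s).im * (u s).im) := by
        funext s; simp only [hNf]; rw [hnormsq, hnormsq]; ring
      rw [hNf']
      exact ((hvre.mul hvre).add (hvim.mul hvim)).add
        (((hure.mul hure).add (huim.mul huim)).const_mul (k ^ 2))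
    have hMd : HasDerivAt Mf
        ((u' y).re * (v y).re + (u y).re * (w y).re
          + ((u' y).im * (v y).im + (u y).im * (w y).im)) y := by
      have hMf' : Mf = fun s => (u s).re * (v s).re + (u s).im * (v s).im := by
        funext s; simp only [hMf]
      rw [hMf']
      exact (hure.mul hvre).add (huim.mul hvim)
    -- scalar identities
    have hNid : y * (((w y).re * (v y).re + (v y).re * (w y).re)
          + ((w y).im * (v y).im + (v y).im * (w y).im)
          + k ^ 2 * (((u' y).re * (u y).re + (u y).re * (u' y).re)
            + ((u' y).im * (u y).im + (u y).im * (u' y).im)))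
        = ((m : ℝ) + 1) * Nf y + 2 * lam * y ^ 2 * Mf y := by
      simp only [hNf, hMf, hnormsq]
      linear_combination 2 * (v y).re * hre + 2 * (v y).im * him
        - 2 * k ^ 2 * (u y).re * hvre' - 2 * k ^ 2 * (u y).im * hvim'
        + 2 * ((v y).re ^ 2 + (v y).im ^ 2 + k ^ 2 * ((u y).re ^ 2 + (u y).im ^ 2)) * ha
    have hMid : y * ((u' y).re * (v y).re + (u y).re * (w y).re
          + ((u' y).im * (v y).im + (u y).im * (w y).im))
        = ((v y).re ^ 2 + (v y).im ^ 2) + ((m : ℝ) + 1) * Mf y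
          + (lam * y ^ 2 - k ^ 2) * ((u y).re ^ 2 + (u y).im ^ 2) := by
      simp only [hMf, hnormsq]
      linear_combination (u y).re * hre + (u y).im * him
        - (v y).re * hvre' - (v y).im * hvim'
        + 2 * ((u y).re * (v y).re + (u y).im * (v y).im) * ha
    constructor
    · have hdiv := hNd.div (hasDerivAt_pow (m + 1) y) (pow_ne_zero _ hy0.ne')
      refine hdiv.congr_deriv (Eq.symm ?_)
      simp only [Nat.cast_add, Nat.cast_one, Nat.add_sub_cancel]
      rw [div_eq_div_iff (pow_ne_zero _ hy0.ne') (pow_ne_zero _ (pow_ne_zero _ hy0.ne'))]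
      linear_combination (-(y ^ m * y ^ m)) * hNid
    · have hdiv := (hMd.neg).div (hasDerivAt_pow (m + 1) y) (pow_ne_zero _ hy0.ne')
      refine hdiv.congr_deriv (Eq.symm ?_)
      simp only [Nat.cast_add, Nat.cast_one, Nat.add_sub_cancel, hnormsq, Pi.neg_apply]
      rw [div_eq_div_iff (pow_ne_zero _ hy0.ne') (pow_ne_zero _ (pow_ne_zero _ hy0.ne'))]
      linear_combination (y ^ (m + 1) * y ^ (m + 1)) * hMid
  -- basic bounds
  have hk2 : (0:ℝ) < k ^ 2 := by positivity
  set C : ℝ := lam * (1 + (k ^ 2)⁻¹) * y₀ with hC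
  have hC0 : 0 < C := by rw [hC]; positivity
  have hNnonneg : ∀ y : ℝ, 0 ≤ Nf y := by intro y; simp only [hNf]; positivity
  have hMbound : ∀ y : ℝ, |Mf y| ≤ (‖u y‖ ^ 2 + ‖v y‖ ^ 2) / 2 := by
    intro y
    rw [abs_le, hnormsq (u y), hnormsq (v y)]
    constructor <;> simp only [hMf] <;>
      nlinarith [sq_nonneg ((u y).re - (v y).re), sq_nonneg ((u y).im - (v y).im),
        sq_nonneg ((u y).re + (v y).re), sq_nonneg ((u y).im + (v y).im)]
  have huvN : ∀ y : ℝ, ‖u y‖ ^ 2 + ‖v y‖ ^ 2 ≤ (1 + (k ^ 2)⁻¹) * Nf y := by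
    intro y
    have h1 : (k ^ 2)⁻¹ * k ^ 2 = 1 := inv_mul_cancel₀ hk2.ne'
    have h2 : 0 ≤ (k ^ 2)⁻¹ * ‖v y‖ ^ 2 := by positivity
    have h3 : 0 ≤ k ^ 2 * ‖u y‖ ^ 2 := by positivity
    simp only [hNf]
    have e : (1 + (k ^ 2)⁻¹) * (‖v y‖ ^ 2 + k ^ 2 * ‖u y‖ ^ 2)
        = ‖v y‖ ^ 2 + (k ^ 2)⁻¹ * ‖v y‖ ^ 2 + ((k ^ 2)⁻¹ * k ^ 2) * ‖u y‖ ^ 2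
          + k ^ 2 * ‖u y‖ ^ 2 := by ring
    rw [e, h1]
    linarith [h3]
  have hEnonneg : ∀ y ∈ Ioo (0:ℝ) y₀, 0 ≤ Ef y := by
    intro y hy
    simp only [hEf]
    exact div_nonneg (hNnonneg y) (pow_nonneg hy.1.le _)
  have hNEf : ∀ y ∈ Ioo (0:ℝ) y₀, Nf y = Ef y * y ^ (m + 1) := by
    intro y hy
    rw [hEf]
    field_simp [pow_ne_zero _ (ne_of_gt hy.1)]
  have hEbound : ∀ y ∈ Ioo (0:ℝ) y₀, |2 * lam * Mf y / y ^ m| ≤ C * Ef y := by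
    intro y hy
    obtain ⟨hy0, hy1⟩ := hy
    have hym : (0:ℝ) < y ^ m := pow_pos hy0 m
    have hym1 : (0:ℝ) < y ^ (m + 1) := pow_pos hy0 (m + 1)
    have h1 : |2 * lam * Mf y / y ^ m| = 2 * lam * |Mf y| / y ^ m := by
      rw [abs_div, abs_of_pos hym, abs_mul, abs_of_pos (by positivity : (0:ℝ) < 2 * lam)]
    have key : 2 * lam * |Mf y| * y ≤ C * Nf y := by
      have h2 : 2 * |Mf y| ≤ (1 + (k ^ 2)⁻¹) * Nf y :=
        le_trans (by linarith [hMbound y]) (huvN y)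
      calc 2 * lam * |Mf y| * y = lam * y * (2 * |Mf y|) := by ring
        _ ≤ lam * y₀ * ((1 + (k ^ 2)⁻¹) * Nf y) := by
            apply mul_le_mul (mul_le_mul_of_nonneg_left hy1.le hlam.le) h2
              (by positivity) (by positivity)
        _ = C * Nf y := by rw [hC]; ring
    calc |2 * lam * Mf y / y ^ m| = 2 * lam * |Mf y| / y ^ m := h1
      _ = (2 * lam * |Mf y| * y) / y ^ (m + 1) := by rw [pow_succ]; field_simp
      _ ≤ (C * Nf y) / y ^ (m + 1) := by gcongr
      _ = C * Ef y := by rw [hEf]; ring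
  have hexpd : ∀ (c y : ℝ), HasDerivAt (fun s : ℝ => Real.exp (c * s)) (c * Real.exp (c * y)) y := by
    intro c y
    exact ((hasDerivAt_id' y).const_mul c).exp.congr_deriv (by ring)
  have hioo : interior (Ioo (0:ℝ) y₀) = Ioo 0 y₀ := isOpen_Ioo.interior_eq
  have hmono : MonotoneOn (fun y => Ef y * Real.exp (C * y)) (Ioo 0 y₀) := by
    apply monotoneOn_of_deriv_nonneg (convex_Ioo 0 y₀)
    · intro y hy
      exact (((hEGd y hy).1.mul (hexpd C y)).continuousAt).continuousWithinAt
    · intro y hy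
      rw [hioo] at hy
      exact (((hEGd y hy).1.mul (hexpd C y)).differentiableAt).differentiableWithinAt
    · intro y hy
      rw [hioo] at hy
      have hd := (hEGd y hy).1.mul (hexpd C y)
      rw [show deriv (fun y => Ef y * Real.exp (C * y)) y = _ from hd.deriv]
      have h1 := (abs_le.1 (hEbound y hy)).1
      have h2 := Real.exp_pos (C * y)
      linarith [mul_le_mul_of_nonneg_right h1 h2.le]
  have hanti : AntitoneOn (fun y => Ef y * Real.exp (-C * y)) (Ioo 0 y₀) := by
    apply antitoneOn_of_deriv_nonpos (convex_Ioo 0 y₀)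
    · intro y hy
      exact (((hEGd y hy).1.mul (hexpd (-C) y)).continuousAt).continuousWithinAt
    · intro y hy
      rw [hioo] at hy
      exact (((hEGd y hy).1.mul (hexpd (-C) y)).differentiableAt).differentiableWithinAt
    · intro y hy
      rw [hioo] at hy
      have hd := (hEGd y hy).1.mul (hexpd (-C) y)
      rw [show deriv (fun y => Ef y * Real.exp (-C * y)) y = _ from hd.deriv]
      have h1 := (abs_le.1 (hEbound y hy)).2
      have h2 := Real.exp_pos (-C * y)
      linarith [mul_le_mul_of_nonneg_right h1 h2.le]
  -- main claim: the energy vanishes identically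
  have hKEY : ∀ y₂ ∈ Ioo (0:ℝ) y₀, Ef y₂ = 0 := by
    intro y₂ hy₂
    by_contra hE2ne
    have hE2 : 0 < Ef y₂ := (hEnonneg y₂ hy₂).lt_of_ne (Ne.symm hE2ne)
    have hy₂0 : (0:ℝ) < y₂ := hy₂.1
    have hy₂y₀ : y₂ < y₀ := hy₂.2
    set ε : ℝ := Ef y₂ * Real.exp (-C * y₂) with hε
    have hε0 : 0 < ε := by rw [hε]; positivity
    set Em : ℝ := Ef y₂ * Real.exp (C * y₀) with hEm
    have hEm0 : 0 < Em := by rw [hEm]; positivity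
    set B : ℝ := (1 + (k ^ 2)⁻¹) * Em / 2 with hB
    have hB0 : 0 < B := by rw [hB]; positivity
    have hlow : ∀ y ∈ Ioo (0:ℝ) y₀, y ≤ y₂ → ε ≤ Ef y := by
      intro y hy hyle
      have h := hanti hy hy₂ hyle
      have h1 : Ef y * Real.exp (-C * y) ≤ Ef y := by
        apply mul_le_of_le_one_right (hEnonneg y hy)
        apply Real.exp_le_one_iff.2
        rw [neg_mul]
        exact neg_nonpos.2 (mul_nonneg hC0.le hy.1.le)
      exact le_trans h h1
    have hup : ∀ y ∈ Ioo (0:ℝ) y₀, Ef y ≤ Em := by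
      intro y hy
      rcases le_total y y₂ with h | h
      · have h1 := hmono hy hy₂ h
        have h2 : Ef y ≤ Ef y * Real.exp (C * y) :=
          le_mul_of_one_le_right (hEnonneg y hy) (Real.one_le_exp (mul_nonneg hC0.le hy.1.le))
        have h3 : Ef y₂ * Real.exp (C * y₂) ≤ Em := by
          rw [hEm]
          exact mul_le_mul_of_nonneg_left (Real.exp_le_exp.2 (mul_le_mul_of_nonneg_left hy₂y₀.le hC0.le)) hE2.le
        simp only at h1
        linarith
      · have h1 := hanti hy₂ hy h
        simp only at h1
        have h2 := mul_le_mul_of_nonneg_right h1 (Real.exp_pos (C * y)).le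
        have h6 : Ef y * Real.exp (-C * y) * Real.exp (C * y) = Ef y := by
          rw [mul_assoc, ← Real.exp_add]
          have e : -C * y + C * y = 0 := by ring
          rw [e, Real.exp_zero, mul_one]
        have h7 : Ef y₂ * Real.exp (-C * y₂) * Real.exp (C * y)
            = Ef y₂ * Real.exp (-C * y₂ + C * y) := by
          rw [mul_assoc, ← Real.exp_add]
        rw [h6, h7] at h2
        have h4 : Real.exp (-C * y₂ + C * y) ≤ Real.exp (C * y₀) := by
          apply Real.exp_le_exp.2
          have e1 : C * y ≤ C * y₀ := mul_le_mul_of_nonneg_left hy.2.le hC0.le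
          have e2 : 0 ≤ C * y₂ := mul_nonneg hC0.le hy₂.1.le
          linarith
        calc Ef y ≤ Ef y₂ * Real.exp (-C * y₂ + C * y) := h2
          _ ≤ Ef y₂ * Real.exp (C * y₀) := mul_le_mul_of_nonneg_left h4 hE2.le
          _ = Em := by rw [hEm]
    have hGbd : ∀ y ∈ Ioo (0:ℝ) y₀, |Gf y| ≤ B := by
      intro y hy
      have hym1 : (0:ℝ) < y ^ (m + 1) := pow_pos hy.1 _
      have h1 : |Gf y| = |Mf y| / y ^ (m + 1) := by
        simp only [hGf]
        rw [abs_div, abs_neg, abs_of_pos hym1]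
      rw [h1]
      have h2 : |Mf y| ≤ (1 + (k ^ 2)⁻¹) * Nf y / 2 :=
        le_trans (hMbound y) (by linarith [huvN y])
      calc |Mf y| / y ^ (m + 1) ≤ ((1 + (k ^ 2)⁻¹) * Nf y / 2) / y ^ (m + 1) := by gcongr
        _ = (1 + (k ^ 2)⁻¹) / 2 * Ef y := by rw [hEf]; ring
        _ ≤ (1 + (k ^ 2)⁻¹) / 2 * Em :=
            mul_le_mul_of_nonneg_left (hup y hy) (by positivity)
        _ = B := by rw [hB]; ring
    -- the eventual lower and upper bounds for the averaged integral
    have hboth : ∀ᶠ R in atTop,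
        ε / (4 * k ^ 2) ≤ (Real.log R)⁻¹ * ∫ y in Ioo R⁻¹ y₀, ‖u y‖ ^ 2 / y ^ (m + 2) ∧
        (Real.log R)⁻¹ * (∫ y in Ioo R⁻¹ y₀, ‖u y‖ ^ 2 / y ^ (m + 2)) ≤
          Em / k ^ 2 * (|Real.log y₀| + 1) := by
      filter_upwards [eventually_ge_atTop
        (max (Real.exp ((4 * B + 2 * ε * |Real.log y₂|) / ε)) (max 3 (2 / y₂)))] with R hR
      have hR3 : (3:ℝ) ≤ R := le_trans (le_trans (le_max_left _ _) (le_max_right _ _)) hR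
      have hR2y : 2 / y₂ ≤ R := le_trans (le_trans (le_max_right _ _) (le_max_right _ _)) hR
      have hRA : Real.exp ((4 * B + 2 * ε * |Real.log y₂|) / ε) ≤ R :=
        le_trans (le_max_left _ _) hR
      have hR0 : (0:ℝ) < R := by linarith
      have hlogR1 : 1 ≤ Real.log R := by
        rw [Real.le_log_iff_exp_le hR0]
        linarith [Real.exp_one_lt_d9]
      have hlogR0 : (0:ℝ) < Real.log R := by linarith
      have hlogR_ge : (4 * B + 2 * ε * |Real.log y₂|) / ε ≤ Real.log R := by
        have h := Real.log_le_log (Real.exp_pos _) hRA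
        rwa [Real.log_exp] at h
      set q : ℝ := R⁻¹ with hqdef
      have hq0 : (0:ℝ) < q := inv_pos.2 hR0
      have hqy₂ : q < y₂ := by
        have h1 : q ≤ (2 / y₂)⁻¹ := inv_anti₀ (by positivity) hR2y
        have h2 : (2 / y₂)⁻¹ = y₂ / 2 := by rw [inv_div]
        rw [h2] at h1
        linarith
      have hqley₂ : q ≤ y₂ := hqy₂.le
      have hqy₀ : q < y₀ := lt_trans hqy₂ hy₂y₀
      have hlogq : Real.log q = -Real.log R := Real.log_inv R
      have hsub2 : Icc q y₂ ⊆ Ioo (0:ℝ) y₀ := fun x hx =>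
        ⟨lt_of_lt_of_le hq0 hx.1, lt_of_le_of_lt hx.2 hy₂y₀⟩
      have huIcc : uIcc q y₂ = Icc q y₂ := uIcc_of_le hqley₂
      have hcupow : ContinuousOn (fun x => ‖u x‖ ^ 2) (Ioo (0:ℝ) y₀) := (hcu.norm).pow 2
      have hcvpow : ContinuousOn (fun x => ‖v x‖ ^ 2) (Ioo (0:ℝ) y₀) := (hcv.norm).pow 2
      have hpowne : ∀ x ∈ Icc q y₂, x ^ (m + 2) ≠ 0 := fun x hx =>
        pow_ne_zero _ (ne_of_gt (lt_of_lt_of_le hq0 hx.1))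
      have II1 : IntervalIntegrable (fun x => ‖u x‖ ^ 2 / x ^ (m + 2)) volume q y₂ := by
        apply ContinuousOn.intervalIntegrable
        rw [huIcc]
        exact (hcupow.mono hsub2).div ((continuous_pow (m + 2)).continuousOn) hpowne
      have II2 : IntervalIntegrable (fun x => ‖v x‖ ^ 2 / x ^ (m + 2)) volume q y₂ := by
        apply ContinuousOn.intervalIntegrable
        rw [huIcc]
        exact (hcvpow.mono hsub2).div ((continuous_pow (m + 2)).continuousOn) hpowne
      have II3 : IntervalIntegrable (fun x => lam * x ^ 2 * (‖u x‖ ^ 2 / x ^ (m + 2)))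
          volume q y₂ := by
        apply ContinuousOn.intervalIntegrable
        rw [huIcc]
        exact (continuousOn_const.mul ((continuous_pow 2).continuousOn)).mul
          ((hcupow.mono hsub2).div ((continuous_pow (m + 2)).continuousOn) hpowne)
      set I1 : ℝ := ∫ x in q..y₂, ‖u x‖ ^ 2 / x ^ (m + 2) with hI1def
      set I2 : ℝ := ∫ x in q..y₂, ‖v x‖ ^ 2 / x ^ (m + 2) with hI2def
      set I3 : ℝ := ∫ x in q..y₂, lam * x ^ 2 * (‖u x‖ ^ 2 / x ^ (m + 2)) with hI3def
      have hI1nonneg : 0 ≤ I1 := by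
        rw [hI1def]
        exact intervalIntegral.integral_nonneg hqley₂ (fun x hx =>
          div_nonneg (by positivity) (pow_nonneg (le_trans hq0.le hx.1) _))
      have hI3nonneg : 0 ≤ I3 := by
        rw [hI3def]
        apply intervalIntegral.integral_nonneg hqley₂
        intro x hx
        have hx0 : 0 < x := lt_of_lt_of_le hq0 hx.1
        positivity
      -- FTC for Gf
      have hFTC : ∫ x in q..y₂,
          (k ^ 2 * ‖u x‖ ^ 2 - ‖v x‖ ^ 2 - lam * x ^ 2 * ‖u x‖ ^ 2) / x ^ (m + 2)
          = Gf y₂ - Gf q := by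
        apply intervalIntegral.integral_eq_sub_of_hasDerivAt
        · intro x hx
          rw [huIcc] at hx
          exact (hEGd x (hsub2 hx)).2
        · apply ContinuousOn.intervalIntegrable
          rw [huIcc]
          apply ContinuousOn.div _ ((continuous_pow (m + 2)).continuousOn) hpowne
          exact ((continuousOn_const.mul (hcupow.mono hsub2)).sub (hcvpow.mono hsub2)).sub
            ((continuousOn_const.mul ((continuous_pow 2).continuousOn)).mul (hcupow.mono hsub2))
      have hsplitfun : (fun x : ℝ =>
            (k ^ 2 * ‖u x‖ ^ 2 - ‖v x‖ ^ 2 - lam * x ^ 2 * ‖u x‖ ^ 2) / x ^ (m + 2))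
          = fun x : ℝ => k ^ 2 * (‖u x‖ ^ 2 / x ^ (m + 2)) - ‖v x‖ ^ 2 / x ^ (m + 2)
            - lam * x ^ 2 * (‖u x‖ ^ 2 / x ^ (m + 2)) := by
        funext x
        rw [sub_div, sub_div, mul_div_assoc, mul_div_assoc]
      have hsplit : k ^ 2 * I1 - I2 - I3 = Gf y₂ - Gf q := by
        rw [← hFTC, hsplitfun]
        rw [intervalIntegral.integral_sub (((II1.const_mul (k ^ 2)).sub II2)) II3,
          intervalIntegral.integral_sub (II1.const_mul (k ^ 2)) II2,
          intervalIntegral.integral_const_mul]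
      have hGdiff : -(2 * B) ≤ Gf y₂ - Gf q := by
        have h1 := abs_le.1 (hGbd y₂ hy₂)
        have h2 := abs_le.1 (hGbd q ⟨hq0, hqy₀⟩)
        linarith
      have hI2bd : I2 ≤ k ^ 2 * I1 + 2 * B := by linarith
      -- lower bound for I2 + k² I1 via the log integral
      have hptw : ∀ x ∈ Icc q y₂,
          ε * x⁻¹ ≤ ‖v x‖ ^ 2 / x ^ (m + 2) + k ^ 2 * (‖u x‖ ^ 2 / x ^ (m + 2)) := by
        intro x hx
        have hx0 : 0 < x := lt_of_lt_of_le hq0 hx.1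
        have hEx := hlow x (hsub2 hx) hx.2
        have heq : ‖v x‖ ^ 2 / x ^ (m + 2) + k ^ 2 * (‖u x‖ ^ 2 / x ^ (m + 2))
            = Ef x * x⁻¹ := by
          rw [hEf]
          simp only [hNf]
          have e : x ^ (m + 2) = x ^ (m + 1) * x := by ring
          rw [e, ← mul_div_assoc, ← add_div, ← div_div, div_eq_mul_inv]
        rw [heq]
        exact mul_le_mul_of_nonneg_right hEx (inv_nonneg.2 hx0.le)
      have hIinv : IntervalIntegrable (fun x => ε * x⁻¹) volume q y₂ := by
        apply ContinuousOn.intervalIntegrable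
        rw [huIcc]
        exact continuousOn_const.mul (continuousOn_inv₀.mono
          (fun x hx => ne_of_gt (lt_of_lt_of_le hq0 hx.1)))
      have hlow1 : ∫ x in q..y₂, ε * x⁻¹ ≤ I2 + k ^ 2 * I1 := by
        have h1 := intervalIntegral.integral_mono_on hqley₂ hIinv
          (II2.add (II1.const_mul (k ^ 2))) hptw
        rw [intervalIntegral.integral_add II2 (II1.const_mul (k ^ 2))] at h1
        rw [hI2def, hI1def, ← intervalIntegral.integral_const_mul]
        exact h1
      have hlow2 : ∫ x in q..y₂, ε * x⁻¹ = ε * (Real.log y₂ - Real.log q) := by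
        rw [intervalIntegral.integral_const_mul]
        congr 1
        rw [integral_inv (by rw [huIcc]; intro h; exact absurd h.1 (not_le.2 hq0)),
          Real.log_div (ne_of_gt hy₂0) (ne_of_gt hq0)]
      have hI1low : (ε * (Real.log y₂ + Real.log R) - 2 * B) / (2 * k ^ 2) ≤ I1 := by
        rw [div_le_iff₀ (by positivity)]
        have := hlow1
        rw [hlow2, hlogq] at this
        linarith [hI2bd]
      -- pass to the set integral over (q, y₀)
      have hI1set : I1 = ∫ x in Ioo q y₂, ‖u x‖ ^ 2 / x ^ (m + 2) := by
        rw [hI1def, intervalIntegral.integral_of_le hqley₂,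
          MeasureTheory.integral_Ioc_eq_integral_Ioo]
      have hptw2 : ∀ x ∈ Ioo q y₀, ‖u x‖ ^ 2 / x ^ (m + 2) ≤ Em / k ^ 2 * x⁻¹ := by
        intro x hx
        have hx0 : 0 < x := lt_trans hq0 hx.1
        have hxI : x ∈ Ioo (0:ℝ) y₀ := ⟨hx0, hx.2⟩
        have h2 : k ^ 2 * ‖u x‖ ^ 2 ≤ Nf x := by
          have : Nf x = ‖v x‖ ^ 2 + k ^ 2 * ‖u x‖ ^ 2 := by rw [hNf]
          rw [this]
          linarith [sq_nonneg ‖v x‖]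
        have h3 : Nf x = Ef x * x ^ (m + 1) := hNEf x hxI
        have h4 : Ef x * x ^ (m + 1) ≤ Em * x ^ (m + 1) :=
          mul_le_mul_of_nonneg_right (hup x hxI) (by positivity)
        rw [div_le_iff₀ (pow_pos hx0 (m + 2))]
        have h5 : Em / k ^ 2 * x⁻¹ * x ^ (m + 2) = (Em * x ^ (m + 1)) / k ^ 2 := by
          field_simp
          ring
        rw [h5, le_div_iff₀ hk2]
        linarith
      have hcont_big : ContinuousOn (fun x => ‖u x‖ ^ 2 / x ^ (m + 2)) (Ioo q y₀) := by
        apply ContinuousOn.div (hcupow.mono (fun x hx => ⟨lt_trans hq0 hx.1, hx.2⟩))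
          ((continuous_pow (m + 2)).continuousOn)
        exact fun x hx => pow_ne_zero _ (ne_of_gt (lt_trans hq0 hx.1))
      have hJint : IntegrableOn (fun x => ‖u x‖ ^ 2 / x ^ (m + 2)) (Ioo q y₀) := by
        apply Integrable.mono' (g := fun _ : ℝ => Em / k ^ 2 * R)
          (integrableOn_const measure_Ioo_lt_top.ne)
          (hcont_big.aestronglyMeasurable measurableSet_Ioo)
        rw [ae_restrict_iff' measurableSet_Ioo]
        apply Filter.Eventually.of_forall
        intro x hx
        have hx0 : 0 < x := lt_trans hq0 hx.1
        rw [Real.norm_eq_abs, abs_of_nonneg (by positivity)]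
        calc ‖u x‖ ^ 2 / x ^ (m + 2) ≤ Em / k ^ 2 * x⁻¹ := hptw2 x hx
          _ ≤ Em / k ^ 2 * R := by
              apply mul_le_mul_of_nonneg_left _ (by positivity)
              calc x⁻¹ ≤ q⁻¹ := inv_anti₀ hq0 hx.1.le
                _ = R := by rw [hqdef, inv_inv]
      have hJmono : ∫ x in Ioo q y₂, ‖u x‖ ^ 2 / x ^ (m + 2)
          ≤ ∫ x in Ioo q y₀, ‖u x‖ ^ 2 / x ^ (m + 2) := by
        apply setIntegral_mono_set hJint
        · filter_upwards [ae_restrict_mem measurableSet_Ioo] with x hx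
          have hx0 : 0 < x := lt_trans hq0 hx.1
          have : (0:ℝ) ≤ ‖u x‖ ^ 2 / x ^ (m + 2) :=
            div_nonneg (by positivity) (pow_nonneg hx0.le _)
          simpa using this
        · exact (Ioo_subset_Ioo_right hy₂y₀.le).eventuallyLE
      -- upper bound for the set integral
      have hinvInt : IntegrableOn (fun x : ℝ => Em / k ^ 2 * x⁻¹) (Ioo q y₀) := by
        have h1 : IntervalIntegrable (fun x : ℝ => Em / k ^ 2 * x⁻¹) volume q y₀ := by
          apply ContinuousOn.intervalIntegrable
          rw [uIcc_of_le hqy₀.le]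
          exact continuousOn_const.mul (continuousOn_inv₀.mono
            (fun x hx => ne_of_gt (lt_of_lt_of_le hq0 hx.1)))
        exact h1.1.mono_set Ioo_subset_Ioc_self
      have hJupper : ∫ x in Ioo q y₀, ‖u x‖ ^ 2 / x ^ (m + 2)
          ≤ Em / k ^ 2 * (Real.log y₀ + Real.log R) := by
        calc ∫ x in Ioo q y₀, ‖u x‖ ^ 2 / x ^ (m + 2)
            ≤ ∫ x in Ioo q y₀, Em / k ^ 2 * x⁻¹ :=
              setIntegral_mono_on hJint hinvInt measurableSet_Ioo hptw2
          _ = Em / k ^ 2 * ∫ x in Ioo q y₀, x⁻¹ := integral_const_mul _ _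
          _ = Em / k ^ 2 * (Real.log y₀ + Real.log R) := by
              rw [← MeasureTheory.integral_Ioc_eq_integral_Ioo,
                ← intervalIntegral.integral_of_le hqy₀.le,
                integral_inv (by
                  rw [uIcc_of_le hqy₀.le]
                  rintro ⟨e1, e2⟩
                  exact absurd e1 (not_le.2 hq0)),
                Real.log_div (ne_of_gt hy₀) (ne_of_gt hq0), hlogq]
              ring
      constructor
      · -- lower bound
        have hJlow : (ε * (Real.log y₂ + Real.log R) - 2 * B) / (2 * k ^ 2)
            ≤ ∫ x in Ioo q y₀, ‖u x‖ ^ 2 / x ^ (m + 2) := by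
          calc (ε * (Real.log y₂ + Real.log R) - 2 * B) / (2 * k ^ 2) ≤ I1 := hI1low
            _ = ∫ x in Ioo q y₂, ‖u x‖ ^ 2 / x ^ (m + 2) := hI1set
            _ ≤ _ := hJmono
        have hstep : ε / (4 * k ^ 2) * Real.log R
            ≤ (ε * (Real.log y₂ + Real.log R) - 2 * B) / (2 * k ^ 2) := by
          have h1 : 4 * B + 2 * ε * |Real.log y₂| ≤ ε * Real.log R := by
            have := (div_le_iff₀ hε0).1 hlogR_ge
            linarith [this]
          have h3 : ε * -|Real.log y₂| ≤ ε * Real.log y₂ :=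
            mul_le_mul_of_nonneg_left (neg_abs_le (Real.log y₂)) hε0.le
          have hnum : ε * Real.log R ≤ 2 * ε * Real.log y₂ + 2 * ε * Real.log R - 4 * B := by
            linarith
          calc ε / (4 * k ^ 2) * Real.log R = (ε * Real.log R) / (4 * k ^ 2) := by ring
            _ ≤ (2 * ε * Real.log y₂ + 2 * ε * Real.log R - 4 * B) / (4 * k ^ 2) := by gcongr
            _ = (ε * (Real.log y₂ + Real.log R) - 2 * B) / (2 * k ^ 2) := by ring
        calc ε / (4 * k ^ 2)
            = (Real.log R)⁻¹ * (ε / (4 * k ^ 2) * Real.log R) := by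
              rw [mul_comm (ε / (4 * k ^ 2)) (Real.log R), ← mul_assoc,
                inv_mul_cancel₀ hlogR0.ne', one_mul]
          _ ≤ (Real.log R)⁻¹ * ∫ x in Ioo q y₀, ‖u x‖ ^ 2 / x ^ (m + 2) := by
              apply mul_le_mul_of_nonneg_left _ (inv_nonneg.2 hlogR0.le)
              exact le_trans hstep hJlow
      · -- upper bound
        have ht0 : 0 < (Real.log R)⁻¹ := inv_pos.2 hlogR0
        have htle1 : (Real.log R)⁻¹ ≤ 1 := by
          rw [inv_le_one_iff₀]
          right
          exact hlogR1
        have hJnonneg : 0 ≤ ∫ x in Ioo q y₀, ‖u x‖ ^ 2 / x ^ (m + 2) := by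
          apply setIntegral_nonneg measurableSet_Ioo
          intro x hx
          have hx0 : 0 < x := lt_trans hq0 hx.1
          positivity
        calc (Real.log R)⁻¹ * ∫ x in Ioo q y₀, ‖u x‖ ^ 2 / x ^ (m + 2)
            ≤ (Real.log R)⁻¹ * (Em / k ^ 2 * (Real.log y₀ + Real.log R)) :=
              mul_le_mul_of_nonneg_left hJupper ht0.le
          _ = Em / k ^ 2 * ((Real.log R)⁻¹ * Real.log y₀)
                + Em / k ^ 2 * ((Real.log R)⁻¹ * Real.log R) := by ring
          _ = Em / k ^ 2 * ((Real.log R)⁻¹ * Real.log y₀ + 1) := by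
              rw [inv_mul_cancel₀ hlogR0.ne']
              ring
          _ ≤ Em / k ^ 2 * (|Real.log y₀| + 1) := by
              apply mul_le_mul_of_nonneg_left _ (by positivity)
              have h1 : (Real.log R)⁻¹ * Real.log y₀ ≤ |Real.log y₀| := by
                rcases le_or_gt 0 (Real.log y₀) with h | h
                · calc (Real.log R)⁻¹ * Real.log y₀ ≤ 1 * Real.log y₀ :=
                      mul_le_mul_of_nonneg_right htle1 h
                    _ = Real.log y₀ := one_mul _
                    _ ≤ |Real.log y₀| := le_abs_self _
                · calc (Real.log R)⁻¹ * Real.log y₀ ≤ 0 :=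
                      mul_nonpos_of_nonneg_of_nonpos ht0.le h.le
                    _ ≤ |Real.log y₀| := abs_nonneg _
              linarith
    -- conclude: liminf is at least ε/(4k²) > 0, contradiction
    have hcob : Filter.IsBoundedUnder (· ≤ ·) atTop (fun R : ℝ =>
        (Real.log R)⁻¹ * ∫ y in Ioo R⁻¹ y₀, ‖u y‖ ^ 2 / y ^ (m + 2)) :=
      Filter.isBoundedUnder_of_eventually_le (hboth.mono fun R h => h.2)
    have hge := Filter.le_liminf_of_le hcob.isCoboundedUnder_ge
      (hboth.mono fun R h => h.1)
    rw [hlim] at hge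
    have : (0:ℝ) < ε / (4 * k ^ 2) := by positivity
    linarith
  intro y hy
  have hE0 := hKEY y hy
  rw [hEf] at hE0
  have hN0 : Nf y = 0 := by
    rcases div_eq_zero_iff.1 hE0 with h | h
    · exact h
    · exact absurd h (pow_ne_zero _ (ne_of_gt hy.1))
  rw [hNf] at hN0
  have hN0' : ‖v y‖ ^ 2 + k ^ 2 * ‖u y‖ ^ 2 = 0 := hN0
  have h2 : ‖u y‖ ^ 2 = 0 := by nlinarith [hk2, sq_nonneg ‖v y‖, sq_nonneg ‖u y‖]
  have h3 : ‖u y‖ = 0 := pow_eq_zero_iff (by norm_num : (2:ℕ) ≠ 0) |>.1 h2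
  exact norm_eq_zero.1 h3
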